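/- Let s > 1. Then the minimum over x, y ∈ (1, ∞) of the composed value h(y; h(x; s)) equals 2·√(2√s − 1) − 1, and it is attained at x = √s/(√s − 1) and y = √(2√s − 1)/(√(2√s − 1) − 1). -/

import Mathlib

open Filter Set

noncomputable def ridgelessRisk (x s : ℝ) : ℝ := s * (1 - 1 / x) + 1 / (x - 1)

lemma rr_lb (s x : ℝ) (hs : 0 ≤ s) (hx : 1 < x) :
    2 * Real.sqrt s - 1 ≤ ridgelessRisk x s := by
  have hr2 : Real.sqrt s ^ 2 = s := Real.sq_sqrt hs
  have hx0 : (0:ℝ) < x := by linarith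
  have hx1 : (0:ℝ) < x - 1 := by linarith
  rw [← sub_nonneg]
  have key : ridgelessRisk x s - (2 * Real.sqrt s - 1)
      = ((Real.sqrt s - 1) * (x - 1) - 1) ^ 2 / ((x - 1) * x) := by
    rw [ridgelessRisk]
    field_simp
    linear_combination (-1 + 2 * x - x ^ 2) * hr2
  rw [key]
  positivity

lemma rr_eq (s : ℝ) (hs : 1 < s) :
    ridgelessRisk (Real.sqrt s / (Real.sqrt s - 1)) s = 2 * Real.sqrt s - 1 := by
  have hr1 : 1 < Real.sqrt s := by
    have : Real.sqrt 1 < Real.sqrt s := Real.sqrt_lt_sqrt (by norm_num) hs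
    simpa using this
  have hr2 : Real.sqrt s ^ 2 = s := Real.sq_sqrt (by linarith)
  have h1 : Real.sqrt s - 1 ≠ 0 := by linarith
  have h0 : Real.sqrt s ≠ 0 := by linarith
  rw [ridgelessRisk]
  have hx1 : Real.sqrt s / (Real.sqrt s - 1) - 1 = 1 / (Real.sqrt s - 1) := by
    field_simp
    ring
  rw [hx1]
  field_simp
  linear_combination -hr2

lemma mem_gt (r : ℝ) (hr : 1 < r) : 1 < r / (r - 1) := by
  rw [lt_div_iff₀ (by linarith)]
  linarith

theorem one_step_ridgeless_risk_minimum (s : ℝ) (hs : 1 < s) :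
    Real.sqrt s / (Real.sqrt s - 1) ∈ Set.Ioi (1 : ℝ) ∧
    Real.sqrt (2 * Real.sqrt s - 1) / (Real.sqrt (2 * Real.sqrt s - 1) - 1)
      ∈ Set.Ioi (1 : ℝ) ∧
    ridgelessRisk
        (Real.sqrt (2 * Real.sqrt s - 1) / (Real.sqrt (2 * Real.sqrt s - 1) - 1))
        (ridgelessRisk (Real.sqrt s / (Real.sqrt s - 1)) s)
      = 2 * Real.sqrt (2 * Real.sqrt s - 1) - 1 ∧
    ∀ x ∈ Set.Ioi (1 : ℝ), ∀ y ∈ Set.Ioi (1 : ℝ),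
      2 * Real.sqrt (2 * Real.sqrt s - 1) - 1 ≤ ridgelessRisk y (ridgelessRisk x s) := by
  have hr1 : 1 < Real.sqrt s := by
    have : Real.sqrt 1 < Real.sqrt s := Real.sqrt_lt_sqrt (by norm_num) hs
    simpa using this
  have hs' : 1 < 2 * Real.sqrt s - 1 := by linarith
  have ht1 : 1 < Real.sqrt (2 * Real.sqrt s - 1) := by
    have : Real.sqrt 1 < Real.sqrt (2 * Real.sqrt s - 1) :=
      Real.sqrt_lt_sqrt (by norm_num) hs'
    simpa using this
  refine ⟨mem_gt _ hr1, mem_gt _ ht1, ?_, ?_⟩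
  · rw [rr_eq s hs, rr_eq _ hs']
  · intro x hx y hy
    have hx1 : 1 < x := hx
    have hy1 : 1 < y := hy
    have h1 : 2 * Real.sqrt s - 1 ≤ ridgelessRisk x s := rr_lb s x (by linarith) hx1
    have hnn : 0 ≤ ridgelessRisk x s := by linarith
    have h2 : 2 * Real.sqrt (ridgelessRisk x s) - 1 ≤ ridgelessRisk y (ridgelessRisk x s) :=
      rr_lb _ y hnn hy1
    have h3 : Real.sqrt (2 * Real.sqrt s - 1) ≤ Real.sqrt (ridgelessRisk x s) :=
      Real.sqrt_le_sqrt h1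
    linarith
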